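/- arXiv:2307.02842 — 6 statements merged into one kernel-verified Lean document; each statement's English description precedes it below -/
import Mathlib

section
/- Let S be a finite nonempty set, let p be a probability mass function on S, let α ∈ (0,1], let H > 0 and ε > 0 be reals, and let V : S → ℝ satisfy 0 ≤ V(s) ≤ H for all s ∈ S. Let N_ε := {nε : n ∈ ℕ, 0 ≤ n ≤ ⌊H/ε⌋} be the discrete ε-net of [0,H]. Then |max_{x ∈ N_ε} { x − (1/α) Σ_{s∈S} p(s)(x − V(s))⁺ } − sup_{x ∈ ℝ} { x − (1/α) Σ_{s∈S} p(s)(x − V(s))⁺ }| ≤ 2ε. In particular, taking the supremum defining CVaR over the finite net N_ε instead of over ℝ incurs error at most 2ε. -/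
/-- The Conditional Value-at-Risk of `V` under pmf `p` at risk level `α`:
`CVaR^α_p(V) = sup_{x ∈ ℝ} { x − (1/α) Σ_s p(s) (x − V(s))⁺ }`. -/
noncomputable def cvar {S : Type*} [Fintype S] (α : ℝ) (p V : S → ℝ) : ℝ :=
  ⨆ x : ℝ, (x - (1 / α) * ∑ s, p s * max (x - V s) 0)

/-- Taking the supremum defining CVaR over the finite ε-net
`N_ε = {nε : 0 ≤ n ≤ ⌊H/ε⌋}` instead of over ℝ incurs error at most `2ε`. -/
theorem stmt_0 {S : Type*} [Fintype S] [Nonempty S]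
    (p : S → ℝ) (hp0 : ∀ s, 0 ≤ p s) (hp1 : ∑ s, p s = 1)
    (α : ℝ) (hα : α ∈ Set.Ioc (0 : ℝ) 1)
    (H ε : ℝ) (hH : 0 < H) (hε : 0 < ε)
    (V : S → ℝ) (hV : ∀ s, V s ∈ Set.Icc (0 : ℝ) H) :
    |(Finset.range (⌊H / ε⌋₊ + 1)).sup'
        (Finset.nonempty_range_iff.mpr (Nat.succ_ne_zero _))
        (fun n => (n : ℝ) * ε - (1 / α) * ∑ s, p s * max ((n : ℝ) * ε - V s) 0)
      - cvar α p V| ≤ 2 * ε := by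
  obtain ⟨hα0, hα1⟩ := hα
  set f : ℝ → ℝ := fun x => x - (1 / α) * ∑ s, p s * max (x - V s) 0 with hf
  have hinv : (1:ℝ) ≤ 1/α := by rw [le_div_iff₀ hα0]; linarith
  have hinv0 : (0:ℝ) ≤ 1/α := by linarith
  have hsum_nonneg : ∀ x : ℝ, 0 ≤ ∑ s, p s * max (x - V s) 0 := fun x =>
    Finset.sum_nonneg fun s _ => mul_nonneg (hp0 s) (le_max_right _ _)
  have hfle : ∀ x, f x ≤ x := by
    intro x
    have h1 := mul_nonneg hinv0 (hsum_nonneg x)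
    simp only [hf]; linarith
  have hmono : ∀ x y : ℝ, y ≤ x → f x ≤ f y + (x - y) := by
    intro x y hxy
    have hs : ∑ s, p s * max (y - V s) 0 ≤ ∑ s, p s * max (x - V s) 0 :=
      Finset.sum_le_sum fun s _ =>
        mul_le_mul_of_nonneg_left (max_le_max (by linarith) le_rfl) (hp0 s)
    have := mul_le_mul_of_nonneg_left hs hinv0
    simp only [hf]; linarith
  set c : ℝ := ∑ s, p s * V s with hc
  have hc0 : 0 ≤ c := Finset.sum_nonneg fun s _ => mul_nonneg (hp0 s) (hV s).1
  have hcH : c ≤ H := by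
    calc c ≤ ∑ s, p s * H := Finset.sum_le_sum fun s _ =>
            mul_le_mul_of_nonneg_left (hV s).2 (hp0 s)
      _ = H := by rw [← Finset.sum_mul, hp1, one_mul]
  have hform : ∀ x : ℝ, H ≤ x → f x = x - (1/α) * (x - c) := by
    intro x hx
    have : ∑ s, p s * max (x - V s) 0 = x - c := by
      have : ∀ s ∈ Finset.univ, p s * max (x - V s) 0 = p s * x - p s * V s := by
        intro s _
        rw [max_eq_left (by linarith [(hV s).2])]
        ring
      rw [Finset.sum_congr rfl this, Finset.sum_sub_distrib, ← Finset.sum_mul, hp1, one_mul, hc]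
    simp only [hf, this]
  have hfH : ∀ x, f x ≤ H := by
    intro x
    rcases le_or_gt x H with h | h
    · exact (hfle x).trans h
    · rw [hform x h.le]
      nlinarith
  have hbdd : BddAbove (Set.range f) := ⟨H, by rintro _ ⟨x, rfl⟩; exact hfH x⟩
  set M : ℝ := (Finset.range (⌊H / ε⌋₊ + 1)).sup'
        (Finset.nonempty_range_iff.mpr (Nat.succ_ne_zero _))
        (fun n => (n : ℝ) * ε - (1 / α) * ∑ s, p s * max ((n : ℝ) * ε - V s) 0) with hM
  have hMle : M ≤ cvar α p V := by
    rw [hM, cvar]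
    apply Finset.sup'_le
    intro n _
    exact le_ciSup hbdd ((n : ℝ) * ε)
  have hle2 : cvar α p V ≤ M + ε := by
    rw [cvar]
    apply ciSup_le
    intro x
    show f x ≤ M + ε
    -- reduce to y = max (min x H) 0 ∈ [0, H] with f x ≤ f y
    set y : ℝ := max (min x H) 0 with hy
    have hy0 : 0 ≤ y := le_max_right _ _
    have hyH : y ≤ H := max_le (min_le_right _ _) hH.le
    have hxy : f x ≤ f y := by
      rcases le_or_gt x 0 with h0 | h0
      · have hymin : y = 0 := by
          rw [hy, min_eq_left (by linarith), max_eq_right h0]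
        have hf0 : f 0 = 0 := by
          simp only [hf]
          have : ∀ s ∈ Finset.univ, p s * max ((0:ℝ) - V s) 0 = 0 := by
            intro s _
            rw [max_eq_right (by linarith [(hV s).1])]
            ring
          rw [Finset.sum_congr rfl this]
          simp
        rw [hymin, hf0]
        exact (hfle x).trans h0
      · rcases le_or_gt x H with hxH | hxH
        · have : y = x := by rw [hy, min_eq_left hxH, max_eq_left h0.le]
          rw [this]
        · have : y = H := by rw [hy, min_eq_right hxH.le, max_eq_left hH.le]
          rw [this, hform x hxH.le, hform H le_rfl]
          nlinarith
    set n : ℕ := ⌊y / ε⌋₊ with hn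
    have hnmem : n ∈ Finset.range (⌊H / ε⌋₊ + 1) := by
      rw [Finset.mem_range, Nat.lt_succ_iff]
      exact Nat.floor_le_floor (by gcongr)
    have hnle : (n : ℝ) * ε ≤ y := by
      have := Nat.floor_le (show 0 ≤ y / ε by positivity)
      rw [le_div_iff₀ hε] at this
      exact this
    have hylt : y < (n + 1 : ℝ) * ε := by
      have := Nat.lt_floor_add_one (y / ε)
      rw [div_lt_iff₀ hε] at this
      push_cast
      linarith
    have hnet : f ((n : ℝ) * ε) ≤ M :=
      Finset.le_sup' (f := fun n : ℕ => (n : ℝ) * ε - (1 / α) * ∑ s, p s * max ((n : ℝ) * ε - V s) 0) hnmem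
    have := hmono y ((n : ℝ) * ε) hnle
    push_cast at hylt
    linarith
  rw [abs_le]
  constructor <;> linarith
end

section
/- Let S be a finite nonempty set, let p be a probability mass function on S, let α ∈ (0,1], and let V : S → ℝ. Define the Value-at-Risk x* := VaR^α_p(V) := min{ x ∈ ℝ : Σ_{s : V(s) ≤ x} p(s) ≥ α } (this minimum exists since V takes finitely many values). Then the supremum defining CVaR is attained at x*: CVaR^α_p(V) = x* − (1/α) Σ_{s∈S} p(s)(x* − V(s))⁺. -/
/-- The supremum defining CVaR is attained at the Value-at-Risk
`x* = VaR^α_p(V) = min{ x : Σ_{s : V(s) ≤ x} p(s) ≥ α }`. -/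
theorem stmt_2 {S : Type*} [Fintype S] [Nonempty S]
    (p : S → ℝ) (hp0 : ∀ s, 0 ≤ p s) (hp1 : ∑ s, p s = 1)
    (α : ℝ) (hα : α ∈ Set.Ioc (0 : ℝ) 1)
    (V : S → ℝ) (xstar : ℝ)
    (hxstar : IsLeast {x : ℝ | α ≤ ∑ s ∈ Finset.univ.filter (fun s => V s ≤ x), p s} xstar) :
    cvar α p V = xstar - (1 / α) * ∑ s, p s * max (xstar - V s) 0 := by
  obtain ⟨hmem, hleast⟩ := hxstar
  have hα0 : (0:ℝ) < α := hα.1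
  have key : ∀ x : ℝ, x - (1 / α) * ∑ s, p s * max (x - V s) 0 ≤
      xstar - (1 / α) * ∑ s, p s * max (xstar - V s) 0 := by
    intro x
    have hsum : (∑ s, p s * max (x - V s) 0) - (∑ s, p s * max (xstar - V s) 0)
        = ∑ s, p s * (max (x - V s) 0 - max (xstar - V s) 0) := by
      rw [← Finset.sum_sub_distrib]
      exact Finset.sum_congr rfl (fun s _ => by ring)
    have main : α * (x - xstar) ≤ ∑ s, p s * (max (x - V s) 0 - max (xstar - V s) 0) := by
      rcases le_or_gt xstar x with hc | hc
      · calc α * (x - xstar)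
            ≤ (∑ s ∈ Finset.univ.filter (fun s => V s ≤ xstar), p s) * (x - xstar) := by
              apply mul_le_mul_of_nonneg_right hmem (by linarith)
          _ = ∑ s ∈ Finset.univ.filter (fun s => V s ≤ xstar),
                p s * (max (x - V s) 0 - max (xstar - V s) 0) := by
              rw [Finset.sum_mul]
              apply Finset.sum_congr rfl
              intro s hs
              simp only [Finset.mem_filter] at hs
              have h1 : max (x - V s) 0 = x - V s := max_eq_left (by linarith [hs.2])
              have h2 : max (xstar - V s) 0 = xstar - V s := max_eq_left (by linarith [hs.2])
              rw [h1, h2]; ring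
          _ ≤ ∑ s, p s * (max (x - V s) 0 - max (xstar - V s) 0) := by
              apply Finset.sum_le_sum_of_subset_of_nonneg (Finset.filter_subset _ _)
              intro s _ _
              apply mul_nonneg (hp0 s)
              have : max (xstar - V s) 0 ≤ max (x - V s) 0 :=
                max_le_max (by linarith) le_rfl
              linarith
      · set T := Finset.univ.filter (fun s => V s < xstar) with hT
        have hTle : ∑ s ∈ T, p s ≤ α := by
          rcases T.eq_empty_or_nonempty with he | hne
          · simp [he]; linarith
          · have hne' : (T.image V).Nonempty := hne.image _
            set y := (T.image V).max' hne' with hy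
            have hyx : y < xstar := by
              obtain ⟨s, hs, hv⟩ := Finset.mem_image.mp ((T.image V).max'_mem hne')
              simp only [hT, Finset.mem_filter] at hs
              rw [hy, ← hv]; exact hs.2
            have hTeq : T = Finset.univ.filter (fun s => V s ≤ y) := by
              ext s
              simp only [hT, Finset.mem_filter, Finset.mem_univ, true_and]
              constructor
              · intro h
                exact Finset.le_max' _ _ (Finset.mem_image_of_mem V
                  (by simp [hT, Finset.mem_filter, h]))
              · intro h; linarith
            by_contra h
            push_neg at h
            have : α ≤ ∑ s ∈ Finset.univ.filter (fun s => V s ≤ y), p s := by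
              rw [← hTeq]; linarith
            have := hleast this
            linarith
        have hzero : ∑ s, p s * (max (x - V s) 0 - max (xstar - V s) 0)
            = ∑ s ∈ T, p s * (max (x - V s) 0 - max (xstar - V s) 0) := by
          symm
          apply Finset.sum_subset (Finset.subset_univ T)
          intro s _ hsT
          simp only [hT, Finset.mem_filter, Finset.mem_univ, true_and, not_lt] at hsT
          have h1 : max (x - V s) 0 = 0 := max_eq_right (by linarith)
          have h2 : max (xstar - V s) 0 = 0 := max_eq_right (by linarith)
          rw [h1, h2]; ring
        rw [hzero]
        calc α * (x - xstar) ≤ (∑ s ∈ T, p s) * (x - xstar) :=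
              mul_le_mul_of_nonpos_right hTle (by linarith)
          _ = ∑ s ∈ T, p s * (x - xstar) := by rw [Finset.sum_mul]
          _ ≤ ∑ s ∈ T, p s * (max (x - V s) 0 - max (xstar - V s) 0) := by
              apply Finset.sum_le_sum
              intro s _
              apply mul_le_mul_of_nonneg_left _ (hp0 s)
              have : max (xstar - V s) 0 ≤ max (x - V s) 0 + (xstar - x) := by
                apply max_le
                · linarith [le_max_left (x - V s) (0:ℝ)]
                · linarith [le_max_right (x - V s) (0:ℝ)]
              linarith
    have h1 := mul_le_mul_of_nonneg_left main (le_of_lt (one_div_pos.mpr hα0))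
    have h2 : (1/α) * (α * (x - xstar)) = x - xstar := by field_simp
    rw [← hsum] at h1
    have h5 : (1/α) * ((∑ s, p s * max (x - V s) 0) - (∑ s, p s * max (xstar - V s) 0))
        = (1/α) * (∑ s, p s * max (x - V s) 0) - (1/α) * (∑ s, p s * max (xstar - V s) 0) :=
      mul_sub _ _ _
    linarith
  rw [cvar]
  apply le_antisymm (ciSup_le key)
  exact le_ciSup ⟨_, Set.forall_mem_range.mpr key⟩ xstar
end

section
/- Let S and A be finite nonempty sets, let H ≥ 1 be an integer, let α ∈ (0,1], let P_h(·|s,a) be a probability mass function on S for each h ∈ {1,…,H} and (s,a) ∈ S×A, and let r_h : S×A → [0,1] for each h ∈ {1,…,H}. Define the optimal Iterated-CVaR value functions backward by V*_{H+1}(s) := 0, Q*_h(s,a) := r_h(s,a) + CVaR^α_{P_h(·|s,a)}(V*_{h+1}), and V*_h(s) := max_{a∈A} Q*_h(s,a). Suppose for each h ∈ {1,…,H} we are given Q̂_h : S×A → ℝ and V̂_h : S → ℝ with V̂_{H+1}(s) := 0 such that for all h, s, a: Q̂_h(s,a) ≥ r_h(s,a) + CVaR^α_{P_h(·|s,a)}(V̂_{h+1})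 and V̂_h(s) = min{ max_{a∈A} Q̂_h(s,a), H }. Then V̂_h(s) ≥ V*_h(s) for all h ∈ {1,…,H+1} and all s ∈ S (optimism of the truncated upper-confidence value iteration). -/
lemma cvar_term_le {S : Type*} [Fintype S] [Nonempty S] {α : ℝ}
    (hα : α ∈ Set.Ioc (0 : ℝ) 1) {p : S → ℝ} (hp0 : ∀ s, 0 ≤ p s)
    (hp1 : ∑ s, p s = 1) (V : S → ℝ) (x : ℝ) :
    x - (1 / α) * ∑ s, p s * max (x - V s) 0 ≤
      Finset.univ.sup' Finset.univ_nonempty V := by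
  obtain ⟨hα0, hα1⟩ := hα
  set M := Finset.univ.sup' Finset.univ_nonempty V with hM
  have hsum0 : 0 ≤ ∑ s, p s * max (x - V s) 0 :=
    Finset.sum_nonneg fun s _ => mul_nonneg (hp0 s) (le_max_right _ _)
  rcases le_or_gt x M with h | h
  · have : 0 ≤ (1 / α) * ∑ s, p s * max (x - V s) 0 :=
      mul_nonneg (by positivity) hsum0
    linarith
  · have hxM : 0 ≤ x - M := by linarith
    have hsum : x - M ≤ ∑ s, p s * max (x - V s) 0 := by
      calc x - M = ∑ s, p s * (x - M) := by
            rw [← Finset.sum_mul, hp1, one_mul]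
        _ ≤ ∑ s, p s * max (x - V s) 0 := by
            apply Finset.sum_le_sum
            intro s _
            apply mul_le_mul_of_nonneg_left _ (hp0 s)
            have hVs : V s ≤ M := Finset.le_sup' V (Finset.mem_univ s)
            have : x - M ≤ x - V s := by linarith
            exact le_trans this (le_max_left _ _)
    have h1α : 1 ≤ 1 / α := by
      rw [le_div_iff₀ hα0]; linarith
    have : x - M ≤ (1 / α) * ∑ s, p s * max (x - V s) 0 := by
      calc x - M = 1 * (x - M) := (one_mul _).symm
        _ ≤ (1 / α) * ∑ s, p s * max (x - V s) 0 :=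
            mul_le_mul h1α hsum hxM (by positivity)
    linarith

lemma cvar_bddAbove {S : Type*} [Fintype S] [Nonempty S] {α : ℝ}
    (hα : α ∈ Set.Ioc (0 : ℝ) 1) {p : S → ℝ} (hp0 : ∀ s, 0 ≤ p s)
    (hp1 : ∑ s, p s = 1) (V : S → ℝ) :
    BddAbove (Set.range fun x : ℝ => x - (1 / α) * ∑ s, p s * max (x - V s) 0) := by
  refine ⟨Finset.univ.sup' Finset.univ_nonempty V, ?_⟩
  rintro _ ⟨x, rfl⟩
  exact cvar_term_le hα hp0 hp1 V x

lemma cvar_le_sup' {S : Type*} [Fintype S] [Nonempty S] {α : ℝ}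
    (hα : α ∈ Set.Ioc (0 : ℝ) 1) {p : S → ℝ} (hp0 : ∀ s, 0 ≤ p s)
    (hp1 : ∑ s, p s = 1) (V : S → ℝ) :
    cvar α p V ≤ Finset.univ.sup' Finset.univ_nonempty V :=
  ciSup_le (cvar_term_le hα hp0 hp1 V)

lemma cvar_mono {S : Type*} [Fintype S] [Nonempty S] {α : ℝ}
    (hα : α ∈ Set.Ioc (0 : ℝ) 1) {p : S → ℝ} (hp0 : ∀ s, 0 ≤ p s)
    (hp1 : ∑ s, p s = 1) {V W : S → ℝ} (hVW : ∀ s, V s ≤ W s) :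
    cvar α p V ≤ cvar α p W := by
  apply ciSup_le
  intro x
  have hterm : x - (1 / α) * ∑ s, p s * max (x - V s) 0 ≤
      x - (1 / α) * ∑ s, p s * max (x - W s) 0 := by
    have : ∑ s, p s * max (x - W s) 0 ≤ ∑ s, p s * max (x - V s) 0 := by
      apply Finset.sum_le_sum
      intro s _
      apply mul_le_mul_of_nonneg_left _ (hp0 s)
      exact max_le_max (by linarith [hVW s]) le_rfl
    have h0 := hα.1
    have hα' : (0:ℝ) ≤ 1 / α := by positivity
    have := mul_le_mul_of_nonneg_left this hα'
    linarith
  exact le_trans hterm (le_ciSup (cvar_bddAbove hα hp0 hp1 W) x)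

/-- Optimism of truncated upper-confidence value iteration for Iterated CVaR:
if `Q̂_h ≥ r_h + CVaR^α_{P_h}(V̂_{h+1})` and `V̂_h = min{max_a Q̂_h, H}`, then
`V̂_h ≥ V*_h` for all steps `h ∈ {1,…,H+1}`. -/
theorem stmt_8 {S A : Type*} [Fintype S] [Nonempty S] [Fintype A] [Nonempty A]
    (H : ℕ) (hH : 1 ≤ H) (α : ℝ) (hα : α ∈ Set.Ioc (0 : ℝ) 1)
    (P : ℕ → S → A → S → ℝ)
    (hP0 : ∀ h ∈ Finset.Icc 1 H, ∀ s a s', 0 ≤ P h s a s')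
    (hP1 : ∀ h ∈ Finset.Icc 1 H, ∀ s a, ∑ s', P h s a s' = 1)
    (r : ℕ → S → A → ℝ)
    (hr : ∀ h ∈ Finset.Icc 1 H, ∀ s a, r h s a ∈ Set.Icc (0 : ℝ) 1)
    (Qstar : ℕ → S → A → ℝ) (Vstar : ℕ → S → ℝ)
    (hVstarTop : ∀ s, Vstar (H + 1) s = 0)
    (hQstar : ∀ h ∈ Finset.Icc 1 H, ∀ s a,
      Qstar h s a = r h s a + cvar α (P h s a) (Vstar (h + 1)))
    (hVstar : ∀ h ∈ Finset.Icc 1 H, ∀ s,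
      Vstar h s = Finset.univ.sup' Finset.univ_nonempty (Qstar h s))
    (Qhat : ℕ → S → A → ℝ) (Vhat : ℕ → S → ℝ)
    (hVhatTop : ∀ s, Vhat (H + 1) s = 0)
    (hQhat : ∀ h ∈ Finset.Icc 1 H, ∀ s a,
      r h s a + cvar α (P h s a) (Vhat (h + 1)) ≤ Qhat h s a)
    (hVhat : ∀ h ∈ Finset.Icc 1 H, ∀ s,
      Vhat h s = min (Finset.univ.sup' Finset.univ_nonempty (Qhat h s)) (H : ℝ)) :
    ∀ h ∈ Finset.Icc 1 (H + 1), ∀ s, Vstar h s ≤ Vhat h s := by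
  -- main induction: for h with h + d = H + 1, prove both optimism and the bound
  -- Vstar h s ≤ (d : ℝ)
  have key : ∀ d h, h + d = H + 1 → 1 ≤ h →
      ∀ s, Vstar h s ≤ Vhat h s ∧ Vstar h s ≤ (d : ℝ) := by
    intro d
    induction d with
    | zero =>
      intro h hhd _ s
      have : h = H + 1 := by omega
      subst this
      rw [hVstarTop s, hVhatTop s]
      norm_num
    | succ d ih =>
      intro h hhd hh1 s
      have hhH : h ∈ Finset.Icc 1 H := Finset.mem_Icc.mpr ⟨hh1, by omega⟩
      have ih' := ih (h + 1) (by omega) (by omega)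
      have hp0 := hP0 h hhH
      have hp1 := hP1 h hhH
      -- bound on cvar of Vstar (h+1)
      have hcvar_le : ∀ s' a, cvar α (P h s' a) (Vstar (h + 1)) ≤ (d : ℝ) := by
        intro s' a
        refine le_trans (cvar_le_sup' hα (hp0 s' a) (hp1 s' a) _) ?_
        apply Finset.sup'_le
        intro b _
        exact (ih' b).2
      have hQbound : ∀ a, Qstar h s a ≤ (d : ℝ) + 1 := by
        intro a
        rw [hQstar h hhH s a]
        have := (hr h hhH s a).2
        linarith [hcvar_le s a]
      have hVbound : Finset.univ.sup' Finset.univ_nonempty (Qstar h s)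
          ≤ ((d : ℕ) + 1 : ℝ) := by
        apply Finset.sup'_le
        intro a _
        push_cast
        linarith [hQbound a]
      constructor
      · rw [hVstar h hhH s, hVhat h hhH s]
        apply le_min
        · apply Finset.sup'_le
          intro a _
          refine le_trans ?_ (Finset.le_sup' (Qhat h s) (Finset.mem_univ a))
          rw [hQstar h hhH s a]
          refine le_trans ?_ (hQhat h hhH s a)
          have := cvar_mono hα (hp0 s a) (hp1 s a) (fun b => (ih' b).1)
          linarith
        · refine le_trans hVbound ?_
          have : (d : ℝ) + 1 ≤ (H : ℝ) := by
            have : d + 1 ≤ H := by omega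
            exact_mod_cast this
          linarith
      · rw [hVstar h hhH s]
        push_cast
        push_cast at hVbound
        exact hVbound
  intro h hh s
  rw [Finset.mem_Icc] at hh
  exact (key (H + 1 - h) h (by omega) hh.1 s).1
end

section
/- Let S be a finite nonempty set, let p be a probability mass function on S, and let V : S → ℝ. If the risk level α satisfies 0 < α ≤ min{ p(s) : s ∈ S, p(s) > 0 }, then CVaR^α_p(V) = min{ V(s) : s ∈ S, p(s) > 0 }. In particular, as α → 0⁺ the CVaR tends to the minimum of V over the support of p. -/
/-- If `0 < α ≤ min{p(s) : p(s) > 0}`, then `CVaR^α_p(V)` equals the minimum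
of `V` over the support of `p`; in particular, as `α → 0⁺` the CVaR tends to
this minimum. -/
theorem stmt_12 {S : Type*} [Fintype S] [Nonempty S]
    (p : S → ℝ) (hp0 : ∀ s, 0 ≤ p s) (hp1 : ∑ s, p s = 1)
    (α : ℝ) (hα : α ∈ Set.Ioc (0 : ℝ) 1)
    (hαp : ∀ s, 0 < p s → α ≤ p s) (V : S → ℝ) :
    cvar α p V = sInf (V '' {s | 0 < p s}) := by
  obtain ⟨hα0, hα1⟩ := hα
  have hsupp : {s | 0 < p s}.Nonempty := by
    by_contra h
    rw [Set.not_nonempty_iff_eq_empty, Set.eq_empty_iff_forall_notMem] at h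
    have hz : ∀ s, p s = 0 := fun s =>
      le_antisymm (not_lt.mp (h s)) (hp0 s)
    simp [hz] at hp1
  have hne : (V '' {s | 0 < p s}).Nonempty := hsupp.image V
  have hfin : (V '' {s | 0 < p s}).Finite := (Set.toFinite _).image V
  set m := sInf (V '' {s | 0 < p s}) with hm
  have hmem : m ∈ V '' {s | 0 < p s} := hne.csInf_mem hfin
  obtain ⟨s₀, hs₀, hVs₀⟩ := hmem
  have hm_le : ∀ s, 0 < p s → m ≤ V s := fun s hs =>
    csInf_le hfin.bddBelow ⟨s, hs, rfl⟩
  have hub : ∀ x : ℝ, x - (1 / α) * ∑ s, p s * max (x - V s) 0 ≤ m := by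
    intro x
    have hsum : α * max (x - m) 0 ≤ ∑ s, p s * max (x - V s) 0 := by
      have h1 : α * max (x - m) 0 ≤ p s₀ * max (x - V s₀) 0 := by
        rw [hVs₀]
        exact mul_le_mul_of_nonneg_right (hαp s₀ hs₀) (le_max_right _ _)
      refine h1.trans ?_
      exact Finset.single_le_sum (f := fun s => p s * max (x - V s) 0) (fun s _ => mul_nonneg (hp0 s)
        (le_max_right _ _)) (Finset.mem_univ s₀)
    have h2 : x - max (x - m) 0 ≤ m := by
      rcases le_max_iff.mpr (Or.inr (le_refl (0:ℝ))) with _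
      have := le_max_left (x - m) 0
      linarith
    calc x - (1 / α) * ∑ s, p s * max (x - V s) 0
        ≤ x - (1 / α) * (α * max (x - m) 0) := by
          have := mul_le_mul_of_nonneg_left hsum (le_of_lt (one_div_pos.mpr hα0))
          linarith
      _ = x - max (x - m) 0 := by field_simp
      _ ≤ m := h2
  have hfm : m - (1 / α) * ∑ s, p s * max (m - V s) 0 = m := by
    have : ∀ s, p s * max (m - V s) 0 = 0 := by
      intro s
      rcases (hp0 s).lt_or_eq with hs | hs
      · have : max (m - V s) 0 = 0 := max_eq_right (by linarith [hm_le s hs])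
        simp [this]
      · simp [← hs]
    simp [Finset.sum_congr rfl (fun s _ => this s)]
  refine le_antisymm (ciSup_le hub) ?_
  calc m = m - (1 / α) * ∑ s, p s * max (m - V s) 0 := hfm.symm
    _ ≤ cvar α p V := le_ciSup ⟨m, fun y ⟨x, hx⟩ => hx ▸ hub x⟩ m
end

section
/- Let S be a finite nonempty set, let α ∈ (0,1], let H > 0, and let V : S → ℝ satisfy 0 ≤ V(s) ≤ H for all s ∈ S. Let 𝒬 be a nonempty set of probability mass functions on S and let p ∈ 𝒬. Then 0 ≤ sup_{q ∈ 𝒬} CVaR^α_q(V) − CVaR^α_p(V) ≤ (1/α) · sup_{x ∈ [0,H]} ( sup_{q ∈ 𝒬} Σ_{s∈S} q(s)(x − V(s))⁺ − inf_{q ∈ 𝒬} Σ_{s∈S} q(s)(x − V(s))⁺ ); that is, the optimistic CVaR over a confidence set containing the true distribution exceeds the true CVaR by at most 1/α times the maximal diameter of the confidence set measured on the functions s ↦ (x − V(s))⁺, x ∈ [0,H]. -/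
section aux

variable {S : Type*} [Fintype S] {α H : ℝ} {V : S → ℝ}

private lemma sum_max_nonneg (q : S → ℝ) (hq0 : ∀ s, 0 ≤ q s) (x : ℝ) :
    0 ≤ ∑ s, q s * max (x - V s) 0 :=
  Finset.sum_nonneg fun s _ => mul_nonneg (hq0 s) (le_max_right _ _)

private lemma sum_max_le (q : S → ℝ) (hq0 : ∀ s, 0 ≤ q s) (hq1 : ∑ s, q s = 1)
    (hV0 : ∀ s, 0 ≤ V s) {x : ℝ} (hx : x ≤ H) (hH : 0 ≤ H) :
    ∑ s, q s * max (x - V s) 0 ≤ H := by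
  calc ∑ s, q s * max (x - V s) 0 ≤ ∑ s, q s * H := by
        apply Finset.sum_le_sum; intro s _
        exact mul_le_mul_of_nonneg_left (max_le (by linarith [hV0 s]) hH) (hq0 s)
    _ = H := by rw [← Finset.sum_mul, hq1, one_mul]

private lemma sum_max_zero (q : S → ℝ) (hV0 : ∀ s, 0 ≤ V s) {x : ℝ} (hx : x ≤ 0) :
    ∑ s, q s * max (x - V s) 0 = 0 := by
  apply Finset.sum_eq_zero; intro s _
  rw [max_eq_right (by linarith [hV0 s]), mul_zero]

private lemma sum_max_big (q : S → ℝ) (hq1 : ∑ s, q s = 1)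
    {x : ℝ} (hx : ∀ s, V s ≤ x) :
    ∑ s, q s * max (x - V s) 0 = x - ∑ s, q s * V s := by
  have : ∑ s, q s * max (x - V s) 0 = ∑ s, (q s * x - q s * V s) := by
    apply Finset.sum_congr rfl; intro s _
    rw [max_eq_left (by linarith [hx s])]; ring
  rw [this, Finset.sum_sub_distrib, ← Finset.sum_mul, hq1, one_mul]

private lemma f_clamp (hα : 0 < α) (hα1 : α ≤ 1) (hH : 0 < H)
    (hV : ∀ s, V s ∈ Set.Icc (0:ℝ) H)
    (q : S → ℝ) (hq0 : ∀ s, 0 ≤ q s) (hq1 : ∑ s, q s = 1) (x : ℝ) :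
    x - (1/α) * ∑ s, q s * max (x - V s) 0
      ≤ max 0 (min x H) - (1/α) * ∑ s, q s * max (max 0 (min x H) - V s) 0 := by
  have hainv : 1 ≤ 1/α := one_le_one_div hα hα1
  rcases le_or_gt x 0 with h0 | h0
  · have hm : max 0 (min x H) = 0 := by
      rw [max_eq_left]; exact (min_le_left x H).trans h0
    rw [hm, sum_max_zero q (fun s => (hV s).1) h0,
        sum_max_zero q (fun s => (hV s).1) le_rfl]
    simp; linarith
  · rcases le_or_gt x H with h1 | h1
    · rw [max_eq_right (le_min h0.le (by linarith) : (0:ℝ) ≤ min x H),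
          min_eq_left h1]
    · have hm : max 0 (min x H) = H := by
        rw [min_eq_right h1.le, max_eq_right hH.le]
      rw [hm, sum_max_big q hq1 (fun s => (hV s).2.trans h1.le),
          sum_max_big q hq1 (fun s => (hV s).2)]
      nlinarith [mul_le_mul_of_nonneg_left h1.le (by linarith : (0:ℝ) ≤ 1/α - 1)]

end aux

/-- The optimistic CVaR over a confidence set `𝒬` containing the true
distribution `p` exceeds the true CVaR by at most `1/α` times the maximal
diameter of `𝒬` measured on the functions `s ↦ (x − V(s))⁺`, `x ∈ [0,H]`. -/
theorem stmt_13 {S : Type*} [Fintype S] [Nonempty S]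
    (α H : ℝ) (hα : α ∈ Set.Ioc (0 : ℝ) 1) (hH : 0 < H)
    (V : S → ℝ) (hV : ∀ s, V s ∈ Set.Icc (0 : ℝ) H)
    (𝒬 : Set (S → ℝ)) (h𝒬 : ∀ q ∈ 𝒬, (∀ s, 0 ≤ q s) ∧ ∑ s, q s = 1)
    (p : S → ℝ) (hp : p ∈ 𝒬) :
    0 ≤ (⨆ q : 𝒬, cvar α q V) - cvar α p V ∧
      (⨆ q : 𝒬, cvar α q V) - cvar α p V
        ≤ (1 / α) * ⨆ x : Set.Icc (0 : ℝ) H,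
            ((⨆ q : 𝒬, ∑ s, (q : S → ℝ) s * max ((x : ℝ) - V s) 0)
              - ⨅ q : 𝒬, ∑ s, (q : S → ℝ) s * max ((x : ℝ) - V s) 0) := by
  obtain ⟨hα0, hα1⟩ := hα
  haveI : Nonempty 𝒬 := ⟨⟨p, hp⟩⟩
  haveI : Nonempty (Set.Icc (0:ℝ) H) := ⟨⟨0, le_rfl, hH.le⟩⟩
  have hainv : (0:ℝ) ≤ 1/α := by positivity
  set f : (S → ℝ) → ℝ → ℝ :=
    fun q x => x - (1/α) * ∑ s, q s * max (x - V s) 0 with hf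
  -- each f q is bounded above by H
  have hfle : ∀ q ∈ 𝒬, ∀ x : ℝ, f q x ≤ H := by
    intro q hq x
    obtain ⟨hq0, hq1⟩ := h𝒬 q hq
    refine (f_clamp hα0 hα1 hH hV q hq0 hq1 x).trans ?_
    have h1 : max 0 (min x H) ≤ H := max_le hH.le (min_le_right x H)
    have h2 : 0 ≤ (1/α) * ∑ s, q s * max (max 0 (min x H) - V s) 0 :=
      mul_nonneg hainv (sum_max_nonneg q hq0 _)
    linarith
  have hbdd : ∀ q ∈ 𝒬, BddAbove (Set.range (f q)) := by
    intro q hq; exact ⟨H, by rintro _ ⟨x, rfl⟩; exact hfle q hq x⟩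
  have hcvar_eq : ∀ q, cvar α q V = ⨆ x : ℝ, f q x := fun q => rfl
  -- cvar is nonneg and ≤ H
  have hcvar0 : ∀ q ∈ 𝒬, 0 ≤ cvar α q V := by
    intro q hq
    obtain ⟨hq0, hq1⟩ := h𝒬 q hq
    have h0 : f q 0 = 0 := by
      simp only [hf, sum_max_zero q (fun s => (hV s).1) le_rfl, mul_zero, sub_zero]
    rw [hcvar_eq]
    calc (0:ℝ) = f q 0 := h0.symm
      _ ≤ ⨆ x : ℝ, f q x := le_ciSup (hbdd q hq) 0
  have hcvarH : ∀ q ∈ 𝒬, cvar α q V ≤ H := by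
    intro q hq; rw [hcvar_eq]; exact ciSup_le (hfle q hq)
  have hbddQ : BddAbove (Set.range fun q : 𝒬 => cvar α q V) :=
    ⟨H, by rintro _ ⟨q, rfl⟩; exact hcvarH q q.2⟩
  constructor
  · have := le_ciSup hbddQ (⟨p, hp⟩ : 𝒬)
    simpa using sub_nonneg.mpr this
  · -- the diameter term
    set A : ℝ → ℝ := fun x => ⨆ q : 𝒬, ∑ s, (q : S → ℝ) s * max (x - V s) 0 with hA
    set B : ℝ → ℝ := fun x => ⨅ q : 𝒬, ∑ s, (q : S → ℝ) s * max (x - V s) 0 with hB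
    have hbddA : ∀ x ∈ Set.Icc (0:ℝ) H,
        BddAbove (Set.range fun q : 𝒬 => ∑ s, (q : S → ℝ) s * max (x - V s) 0) := by
      intro x hx
      refine ⟨H, ?_⟩
      rintro _ ⟨q, rfl⟩
      exact sum_max_le q (h𝒬 q q.2).1 (h𝒬 q q.2).2 (fun s => (hV s).1) hx.2 hH.le
    have hbddB : ∀ x : ℝ,
        BddBelow (Set.range fun q : 𝒬 => ∑ s, (q : S → ℝ) s * max (x - V s) 0) :=
      fun x => ⟨0, by rintro _ ⟨q, rfl⟩; exact sum_max_nonneg (V := V) q (h𝒬 q q.2).1 x⟩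
    have hABd : ∀ x ∈ Set.Icc (0:ℝ) H, A x - B x ≤ H := by
      intro x hx
      have h1 : A x ≤ H := ciSup_le fun q =>
        sum_max_le q (h𝒬 q q.2).1 (h𝒬 q q.2).2 (fun s => (hV s).1) hx.2 hH.le
      have h2 : 0 ≤ B x := le_ciInf fun q => sum_max_nonneg (V := V) q (h𝒬 q q.2).1 x
      linarith
    have hbddM : BddAbove (Set.range fun x : Set.Icc (0:ℝ) H => A x - B x) :=
      ⟨H, by rintro _ ⟨x, rfl⟩; exact hABd x x.2⟩
    set M : ℝ := ⨆ x : Set.Icc (0:ℝ) H, (A x - B x) with hM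
    rw [sub_le_iff_le_add]
    apply ciSup_le
    rintro ⟨q, hq⟩
    obtain ⟨hq0, hq1⟩ := h𝒬 q hq
    rw [hcvar_eq]
    apply ciSup_le
    intro x
    show f q x ≤ 1 / α * M + cvar α p V
    set y : ℝ := max 0 (min x H) with hy
    have hym : y ∈ Set.Icc (0:ℝ) H :=
      ⟨le_max_left _ _, max_le hH.le (min_le_right x H)⟩
    have step1 : f q x ≤ f q y := f_clamp hα0 hα1 hH hV q hq0 hq1 x
    have step2 : f q y ≤ f p y + (1/α) * (A y - B y) := by
      have hSp : ∑ s, p s * max (y - V s) 0 ≤ A y :=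
        le_ciSup (hbddA y hym) (⟨p, hp⟩ : 𝒬)
      have hSq : B y ≤ ∑ s, q s * max (y - V s) 0 :=
        ciInf_le (hbddB y) (⟨q, hq⟩ : 𝒬)
      have : ∑ s, p s * max (y - V s) 0 - ∑ s, q s * max (y - V s) 0
          ≤ A y - B y := by linarith
      have h3 := mul_le_mul_of_nonneg_left this hainv
      simp only [hf]; linarith [h3]
    have step3 : f p y ≤ cvar α p V := by
      rw [hcvar_eq]; exact le_ciSup (hbdd p hp) y
    have step4 : A y - B y ≤ M := le_ciSup hbddM (⟨y, hym⟩ : Set.Icc (0:ℝ) H)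
    have h4 := mul_le_mul_of_nonneg_left step4 hainv
    calc f q x ≤ f q y := step1
      _ ≤ f p y + 1/α * (A y - B y) := step2
      _ ≤ cvar α p V + 1/α * M := add_le_add step3 h4
      _ = 1/α * M + cvar α p V := add_comm _ _
end

section
/- Let K ≥ 1 and d ≥ 1 be integers, let H > 0 and γ ≥ 0 be reals, and let G_1, …, G_K be reals with 0 ≤ G_k ≤ H for every k. Suppose that for every real ε ≥ 1/√K, the number of indices k ∈ {1,…,K} with G_k ≥ ε is at most d·(4γ/ε² + 1). Then Σ_{k=1}^K G_k² ≤ 1 + d·H² + 4γ·d·(log K + 1), where log denotes the natural logarithm. (This is the refined elliptical potential bound: the sum of squares grows only logarithmically in K.) -/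
/-- Refined elliptical potential bound: if `0 ≤ G_k ≤ H` and for every
`ε ≥ 1/√K` the number of indices with `G_k ≥ ε` is at most `d(4γ/ε² + 1)`,
then `Σ_k G_k² ≤ 1 + d H² + 4γd(log K + 1)`. -/
theorem stmt_14 (K d : ℕ) (hK : 1 ≤ K) (hd : 1 ≤ d)
    (H γ : ℝ) (hH : 0 < H) (hγ : 0 ≤ γ)
    (G : Fin K → ℝ) (hG : ∀ k, 0 ≤ G k ∧ G k ≤ H)
    (hcount : ∀ ε : ℝ, 1 / Real.sqrt K ≤ ε →
      ((Finset.univ.filter (fun k => ε ≤ G k)).card : ℝ)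
        ≤ d * (4 * γ / ε ^ 2 + 1)) :
    ∑ k, G k ^ 2 ≤ 1 + d * H ^ 2 + 4 * γ * d * (Real.log K + 1) := by
  classical
  set σ := Tuple.sort G with hσ
  set g : Fin K → ℝ := G ∘ σ with hg
  have hmono : Monotone g := Tuple.monotone_sort G
  have hsum : ∑ k, G k ^ 2 = ∑ i, g i ^ 2 := (Equiv.sum_comp σ (fun k => G k ^ 2)).symm
  have hKpos : (0:ℝ) < K := by exact_mod_cast hK
  have hsqrt : (0:ℝ) < Real.sqrt K := Real.sqrt_pos.mpr hKpos
  set ε0 : ℝ := 1 / Real.sqrt K with hε0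
  have hε0pos : 0 < ε0 := by positivity
  have hε0sq : ε0 ^ 2 = 1 / K := by
    rw [hε0, div_pow, one_pow, Real.sq_sqrt hKpos.le]
  -- card of filter invariant under σ
  have hcard : ∀ ε : ℝ, (Finset.univ.filter (fun j => ε ≤ g j)).card
      = (Finset.univ.filter (fun k => ε ≤ G k)).card := by
    intro ε
    apply Finset.card_bij (fun j _ => σ j)
    · intro j hj; simp only [Finset.mem_filter, Finset.mem_univ, true_and] at hj ⊢; exact hj
    · intro a ha b hb h; exact σ.injective h
    · intro k hk
      refine ⟨σ.symm k, ?_, by simp⟩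
      simp only [Finset.mem_filter, Finset.mem_univ, true_and] at hk ⊢
      simpa [hg] using hk
  -- counting lower bound: K - i ≤ #{k : g i ≤ G k}
  have hrank : ∀ i : Fin K, K - (i:ℕ) ≤ (Finset.univ.filter (fun k => g i ≤ G k)).card := by
    intro i
    rw [← hcard]
    calc K - (i:ℕ) = (Finset.Ici i).card := (Fin.card_Ici i).symm
      _ ≤ _ := by
          apply Finset.card_le_card
          intro j hj
          simp only [Finset.mem_Ici] at hj
          simp only [Finset.mem_filter, Finset.mem_univ, true_and]
          exact hmono hj
  have hgnn : ∀ i, 0 ≤ g i := fun i => (hG (σ i)).1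
  have hgH : ∀ i, g i ≤ H := fun i => (hG (σ i)).2
  -- key per-index bound on region C
  have hC : ∀ i : Fin K, ε0 ≤ g i → (i:ℕ) + d < K →
      g i ^ 2 ≤ 4 * γ * d / ((K - (i:ℕ) - d : ℕ) : ℝ) := by
    intro i hi hid
    have hgpos : 0 < g i := lt_of_lt_of_le hε0pos hi
    have h1 : ((K - (i:ℕ) : ℕ) : ℝ) ≤ d * (4 * γ / g i ^ 2 + 1) := by
      calc ((K - (i:ℕ) : ℕ) : ℝ) ≤ ((Finset.univ.filter (fun k => g i ≤ G k)).card : ℝ) := by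
            exact_mod_cast hrank i
        _ ≤ _ := hcount (g i) hi
    have hm : ((K - (i:ℕ) - d : ℕ) : ℝ) = ((K - (i:ℕ) : ℕ) : ℝ) - d := by
      have : d ≤ K - (i:ℕ) := by omega
      push_cast [Nat.cast_sub this]; ring
    have h2 : ((K - (i:ℕ) - d : ℕ) : ℝ) ≤ 4 * γ * d / g i ^ 2 := by
      rw [hm]
      have e : (d:ℝ) * (4 * γ / g i ^ 2 + 1) = 4 * γ * d / g i ^ 2 + d := by ring
      linarith [h1, e ▸ h1]
    have hmpos : (0:ℝ) < ((K - (i:ℕ) - d : ℕ) : ℝ) := by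
      have : 1 ≤ K - (i:ℕ) - d := by omega
      exact_mod_cast this
    rw [le_div_iff₀ hmpos]
    calc g i ^ 2 * ((K - (i:ℕ) - d : ℕ) : ℝ) ≤ g i ^ 2 * (4 * γ * d / g i ^ 2) := by
          apply mul_le_mul_of_nonneg_left h2 (sq_nonneg _)
      _ = 4 * γ * ↑d := by
          rw [mul_comm, div_mul_cancel₀ _ (by positivity : g i ^ 2 ≠ 0)]
  -- split the sum
  set A := Finset.univ.filter (fun i : Fin K => g i < ε0) with hA
  set Bc := (Finset.univ.filter (fun i : Fin K => ¬ g i < ε0))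
  set B := Bc.filter (fun i : Fin K => K ≤ (i:ℕ) + d) with hB
  set C := Bc.filter (fun i : Fin K => ¬ K ≤ (i:ℕ) + d) with hCdef
  have hsplit : ∑ i, g i ^ 2 = (∑ i ∈ A, g i ^ 2) + ((∑ i ∈ B, g i ^ 2) + (∑ i ∈ C, g i ^ 2)) := by
    have e1 : ∑ i, g i ^ 2 = (∑ i ∈ A, g i ^ 2) + (∑ i ∈ Bc, g i ^ 2) :=
      (Finset.sum_filter_add_sum_filter_not Finset.univ (fun i => g i < ε0) _).symm
    have e2 : ∑ i ∈ Bc, g i ^ 2 = (∑ i ∈ B, g i ^ 2) + (∑ i ∈ C, g i ^ 2) :=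
      (Finset.sum_filter_add_sum_filter_not Bc (fun i => K ≤ (i:ℕ) + d) _).symm
    rw [e1, e2]
  -- bound A
  have hAsum : ∑ i ∈ A, g i ^ 2 ≤ 1 := by
    calc ∑ i ∈ A, g i ^ 2 ≤ ∑ _i ∈ A, (1/K : ℝ) := by
          apply Finset.sum_le_sum
          intro i hi
          simp only [hA, Finset.mem_filter] at hi
          rw [← hε0sq]
          exact pow_le_pow_left₀ (hgnn i) hi.2.le 2
      _ = A.card * (1/K) := by rw [Finset.sum_const, nsmul_eq_mul]
      _ ≤ K * (1/K) := by
          apply mul_le_mul_of_nonneg_right _ (by positivity)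
          exact_mod_cast (Finset.card_le_card (Finset.filter_subset _ _)).trans_eq (by simp)
      _ = 1 := by field_simp
  -- bound B
  have hBcard : B.card ≤ d := by
    have : ∀ i ∈ B, (i:ℕ) + d - K ∈ Finset.range d := by
      intro i hi
      simp only [hB, Finset.mem_filter] at hi
      have := i.isLt
      simp only [Finset.mem_range]; omega
    have hinj : ∀ i ∈ B, ∀ j ∈ B, (i:ℕ) + d - K = (j:ℕ) + d - K → i = j := by
      intro i hi j hj h
      simp only [hB, Finset.mem_filter] at hi hj
      exact Fin.ext (by omega)
    calc B.card ≤ (Finset.range d).card := Finset.card_le_card_of_injOn _ this hinj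
      _ = d := Finset.card_range d
  have hBsum : ∑ i ∈ B, g i ^ 2 ≤ d * H ^ 2 := by
    calc ∑ i ∈ B, g i ^ 2 ≤ ∑ _i ∈ B, H ^ 2 := by
          apply Finset.sum_le_sum
          intro i _
          exact pow_le_pow_left₀ (hgnn i) (hgH i) 2
      _ = B.card * H ^ 2 := by rw [Finset.sum_const, nsmul_eq_mul]
      _ ≤ d * H ^ 2 := by
          apply mul_le_mul_of_nonneg_right _ (sq_nonneg H)
          exact_mod_cast hBcard
  -- bound C
  have hCsum : ∑ i ∈ C, g i ^ 2 ≤ 4 * γ * d * (1 + Real.log K) := by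
    have h1 : ∑ i ∈ C, g i ^ 2 ≤ ∑ i ∈ C, 4 * γ * d * (((K - (i:ℕ) - d : ℕ) : ℝ))⁻¹ := by
      apply Finset.sum_le_sum
      intro i hi
      simp only [hCdef, Bc, Finset.mem_filter, Finset.mem_univ, true_and, not_lt, not_le] at hi
      simpa [div_eq_mul_inv] using hC i hi.1 (by omega)
    have h2 : ∑ i ∈ C, (((K - (i:ℕ) - d : ℕ) : ℝ))⁻¹ ≤ ∑ m ∈ Finset.Icc 1 K, ((m:ℝ))⁻¹ := by
      have hinj : ∀ i ∈ C, ∀ j ∈ C, K - (i:ℕ) - d = K - (j:ℕ) - d → i = j := by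
        intro i hi j hj h
        simp only [hCdef, Bc, Finset.mem_filter, Finset.mem_univ, true_and, not_le] at hi hj
        have hi' := i.isLt
        have hj' := j.isLt
        exact Fin.ext (by omega)
      have him := Finset.sum_image (s := C) (g := fun i : Fin K => K - (i:ℕ) - d)
        (f := fun m : ℕ => ((m:ℝ))⁻¹) hinj
      rw [← him]
      apply Finset.sum_le_sum_of_subset_of_nonneg
      · intro m hm
        simp only [Finset.mem_image] at hm
        obtain ⟨i, hi, rfl⟩ := hm
        simp only [hCdef, Bc, Finset.mem_filter, Finset.mem_univ, true_and, not_le] at hi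
        have := i.isLt
        simp only [Finset.mem_Icc]; omega
      · intro m _ _; positivity
    have h3 : ∑ m ∈ Finset.Icc 1 K, ((m:ℝ))⁻¹ ≤ 1 + Real.log K := by
      have := harmonic_le_one_add_log K
      rw [harmonic_eq_sum_Icc] at this
      push_cast at this
      exact this
    calc ∑ i ∈ C, g i ^ 2 ≤ 4 * γ * d * ∑ i ∈ C, (((K - (i:ℕ) - d : ℕ) : ℝ))⁻¹ := by
          rw [Finset.mul_sum]; exact h1
      _ ≤ 4 * γ * d * (1 + Real.log K) := by
          apply mul_le_mul_of_nonneg_left (h2.trans h3) (by positivity)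
  rw [hsum, hsplit]
  have : 4 * γ * ↑d * (Real.log ↑K + 1) = 4 * γ * ↑d * (1 + Real.log ↑K) := by ring
  linarith [hAsum, hBsum, hCsum]
end
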